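/- If a sequence (A_n) of measurable subsets of a probability space satisfies (i) μ(A_n ∩ A_m) ≤ K·μ(A_n)·μ(A_m) for all m > n, and (ii) ∑ μ(A_n) = ∞, then the measure of the set of points belonging to infinitely many A_n is at least 1/K. -/

import Mathlib

open MeasureTheory Filter ENNReal Topology

section aux

variable {Ω : Type*} [MeasurableSpace Ω] (μ : Measure Ω)

/-- Pairwise bound combining the hypothesis for `n < m`, symmetry, and the diagonal. -/
lemma pz_pair_bound [IsProbabilityMeasure μ] (A : ℕ → Set Ω) (K : ℝ≥0∞)
    (h1 : ∀ m n : ℕ, n < m → μ (A n ∩ A m) ≤ K * μ (A n) * μ (A m)) (n m : ℕ) :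
    μ (A n ∩ A m) ≤ (if n = m then μ (A n) else 0) + K * μ (A n) * μ (A m) := by
  rcases lt_trichotomy n m with h | h | h
  · simp only [if_neg h.ne, zero_add]
    exact h1 m n h
  · subst h
    simp [Set.inter_self]
  · simp only [if_neg h.ne', zero_add]
    rw [Set.inter_comm]
    calc μ (A m ∩ A n) ≤ K * μ (A m) * μ (A n) := h1 n m h
      _ = K * μ (A n) * μ (A m) := by ring

/-- Chung–Erdős type inequality via Cauchy–Schwarz. -/
lemma pz_key [IsProbabilityMeasure μ] (A : ℕ → Set Ω) (hA : ∀ n, MeasurableSet (A n))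
    (K : ℝ≥0∞)
    (h1 : ∀ m n : ℕ, n < m → μ (A n ∩ A m) ≤ K * μ (A n) * μ (A m)) (N M : ℕ) :
    (∑ i ∈ Finset.range M, μ (A (i + N))) * (∑ i ∈ Finset.range M, μ (A (i + N))) ≤
      ((∑ i ∈ Finset.range M, μ (A (i + N))) +
        K * (∑ i ∈ Finset.range M, μ (A (i + N))) * (∑ i ∈ Finset.range M, μ (A (i + N)))) *
      μ (⋃ i, ⋃ (_ : N ≤ i), A i) := by
  set S : ℝ≥0∞ := ∑ i ∈ Finset.range M, μ (A (i + N)) with hS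
  set f : Ω → ℝ≥0∞ := fun ω => ∑ i ∈ Finset.range M, (A (i + N)).indicator 1 ω with hf
  set U : Set Ω := ⋃ i ∈ Finset.range M, A (i + N) with hU
  have hUmeas : MeasurableSet U := by
    exact MeasurableSet.biUnion (Finset.range M).countable_toSet fun i _ => hA _
  have hfmeas : Measurable f := by
    apply Finset.measurable_sum
    exact fun i _ => (measurable_const).indicator (hA _)
  have hintf : ∫⁻ ω, f ω ∂μ = S := by
    have hsum := lintegral_finset_sum (μ := μ) (Finset.range M)
      (f := fun i => (A (i + N)).indicator (1 : Ω → ℝ≥0∞))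
      (fun i _ => measurable_const.indicator (hA _))
    exact hsum.trans (Finset.sum_congr rfl fun i _ => lintegral_indicator_one (hA _))
  -- pointwise square
  have hsq : ∀ ω, f ω ^ (2 : ℝ) =
      ∑ i ∈ Finset.range M, ∑ j ∈ Finset.range M,
        (A (i + N) ∩ A (j + N)).indicator 1 ω := by
    intro ω
    rw [show ((2 : ℝ)) = ((2 : ℕ) : ℝ) by norm_num, ENNReal.rpow_natCast, sq, hf,
      Finset.sum_mul_sum]
    refine Finset.sum_congr rfl fun i _ => Finset.sum_congr rfl fun j _ => ?_
    rw [Set.inter_indicator_one, Pi.mul_apply]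
  have hintf2 : ∫⁻ ω, f ω ^ (2 : ℝ) ∂μ ≤ S + K * S * S := by
    have h2m : ∀ i j : ℕ, Measurable ((A (i + N) ∩ A (j + N)).indicator
        (1 : Ω → ℝ≥0∞)) := fun i j => (measurable_const).indicator ((hA _).inter (hA _))
    have houter := lintegral_finset_sum (μ := μ) (Finset.range M)
      (f := fun i ω => ∑ j ∈ Finset.range M, (A (i + N) ∩ A (j + N)).indicator 1 ω)
      (fun i _ => Finset.measurable_sum _ fun j _ => h2m i j)
    have hinner : ∀ i, ∫⁻ ω, ∑ j ∈ Finset.range M,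
        (A (i + N) ∩ A (j + N)).indicator 1 ω ∂μ =
        ∑ j ∈ Finset.range M, μ (A (i + N) ∩ A (j + N)) := fun i =>
      (lintegral_finset_sum (μ := μ) (Finset.range M)
        (f := fun j => (A (i + N) ∩ A (j + N)).indicator (1 : Ω → ℝ≥0∞))
        (fun j _ => h2m i j)).trans
      (Finset.sum_congr rfl fun j _ => lintegral_indicator_one ((hA _).inter (hA _)))
    have : ∫⁻ ω, f ω ^ (2 : ℝ) ∂μ =
        ∑ i ∈ Finset.range M, ∑ j ∈ Finset.range M, μ (A (i + N) ∩ A (j + N)) :=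
      (lintegral_congr hsq).trans (houter.trans (Finset.sum_congr rfl fun i _ => hinner i))
    rw [this]
    calc ∑ i ∈ Finset.range M, ∑ j ∈ Finset.range M, μ (A (i + N) ∩ A (j + N))
        ≤ ∑ i ∈ Finset.range M, ∑ j ∈ Finset.range M,
          ((if i + N = j + N then μ (A (i + N)) else 0) +
            K * μ (A (i + N)) * μ (A (j + N))) := by
          refine Finset.sum_le_sum fun i _ => Finset.sum_le_sum fun j _ => ?_
          exact pz_pair_bound μ A K h1 (i + N) (j + N)
      _ = S + K * S * S := by
          simp_rw [Finset.sum_add_distrib]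
          congr 1
          · refine Finset.sum_congr rfl fun i hi => ?_
            simp_rw [_root_.add_left_inj]
            rw [Finset.sum_ite_eq (Finset.range M) i (fun j => μ (A (i + N)))]
            simp [Finset.mem_range.1 hi]
          · rw [hS, mul_assoc, Finset.sum_mul_sum, Finset.mul_sum]
            exact Finset.sum_congr rfl fun i _ => by
              rw [Finset.mul_sum]
              exact Finset.sum_congr rfl fun j _ => by ring
  -- Cauchy-Schwarz
  set g : Ω → ℝ≥0∞ := U.indicator 1 with hg
  have hgmeas : Measurable g := (measurable_const).indicator hUmeas
  have hfg : f * g = f := by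
    funext ω
    by_cases hω : ω ∈ U
    · simp [hg, Set.indicator_of_mem hω]
    · have : f ω = 0 := by
        rw [hf]
        refine Finset.sum_eq_zero fun i hi => ?_
        refine Set.indicator_of_notMem (fun hmem => hω ?_) _
        exact Set.mem_biUnion hi hmem
      simp [Pi.mul_apply, this]
  have hgsq : ∫⁻ ω, g ω ^ (2 : ℝ) ∂μ = μ U := by
    have : ∀ ω, g ω ^ (2 : ℝ) = g ω := by
      intro ω
      by_cases hω : ω ∈ U
      · simp [hg, Set.indicator_of_mem hω]
      · simp [hg, Set.indicator_of_notMem hω, ENNReal.zero_rpow_of_pos (by norm_num : (0:ℝ) < 2)]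
    simp_rw [this]
    exact lintegral_indicator_one hUmeas
  have h22 : Real.HolderConjugate 2 2 := Real.holderConjugate_iff.mpr ⟨by norm_num, by norm_num⟩
  have hCS := ENNReal.lintegral_mul_le_Lp_mul_Lq μ h22 hfmeas.aemeasurable hgmeas.aemeasurable
  rw [hfg, hintf, hgsq] at hCS
  -- so S ≤ I2^(1/2) * (μ U)^(1/2)
  have hhalf : ∀ a : ℝ≥0∞, a ^ (1/2 : ℝ) * a ^ (1/2 : ℝ) = a := by
    intro a
    rw [← ENNReal.rpow_add_of_nonneg _ _ (by norm_num) (by norm_num)]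
    norm_num
  have hSS : S * S ≤ (∫⁻ ω, f ω ^ (2 : ℝ) ∂μ) * μ U := by
    calc S * S ≤ ((∫⁻ ω, f ω ^ (2 : ℝ) ∂μ) ^ (1/2 : ℝ) * μ U ^ (1/2 : ℝ)) *
        ((∫⁻ ω, f ω ^ (2 : ℝ) ∂μ) ^ (1/2 : ℝ) * μ U ^ (1/2 : ℝ)) := mul_le_mul' hCS hCS
      _ = ((∫⁻ ω, f ω ^ (2 : ℝ) ∂μ) ^ (1/2 : ℝ) * (∫⁻ ω, f ω ^ (2 : ℝ) ∂μ) ^ (1/2 : ℝ)) *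
          (μ U ^ (1/2 : ℝ) * μ U ^ (1/2 : ℝ)) := by ring
      _ = (∫⁻ ω, f ω ^ (2 : ℝ) ∂μ) * μ U := by rw [hhalf, hhalf]
  have hUsub : U ⊆ ⋃ i, ⋃ (_ : N ≤ i), A i := by
    refine Set.iUnion₂_subset fun i _ => ?_
    exact Set.subset_iUnion₂ (s := fun i _ => A i) (i + N) (Nat.le_add_left N i)
  calc S * S ≤ (∫⁻ ω, f ω ^ (2 : ℝ) ∂μ) * μ U := hSS
    _ ≤ (S + K * S * S) * μ (⋃ i, ⋃ (_ : N ≤ i), A i) :=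
        mul_le_mul' hintf2 (measure_mono hUsub)

end aux

set_option maxHeartbeats 1000000 in
/-- Paley–Zygmund / Kochen–Stone type lemma. -/
theorem paley_zygmund {Ω : Type*} [MeasurableSpace Ω] (μ : Measure Ω)
    [IsProbabilityMeasure μ] (A : ℕ → Set Ω) (hA : ∀ n, MeasurableSet (A n))
    (K : ℝ≥0∞) (hK : 0 < K)
    (h1 : ∀ m n : ℕ, n < m → μ (A n ∩ A m) ≤ K * μ (A n) * μ (A m))
    (h2 : ∑' n, μ (A n) = ∞) :
    1 / K ≤ μ (Filter.limsup A Filter.atTop) := by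
  rcases eq_or_ne K ∞ with hKtop | hKtop
  · simp [hKtop]
  set V : ℕ → Set Ω := fun N => ⋃ i, ⋃ (_ : N ≤ i), A i with hV
  have hVmeas : ∀ N, MeasurableSet (V N) := fun N =>
    MeasurableSet.iUnion fun i => MeasurableSet.iUnion fun _ => hA i
  have hVanti : Antitone V := fun N N' h =>
    Set.iUnion₂_subset fun i hi => Set.subset_iUnion₂ (s := fun i _ => A i) i (h.trans hi)
  have hlimsup : Filter.limsup A Filter.atTop = ⋂ N, V N := by
    rw [limsup_eq_iInf_iSup_of_nat]
    simp only [Set.iInf_eq_iInter, Set.iSup_eq_iUnion, ge_iff_le]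
    rfl
  -- per-N bound
  have hbound : ∀ N, 1 / K ≤ μ (V N) := by
    intro N
    set t := μ (V N) with ht
    have httop : t ≠ ∞ := measure_ne_top μ _
    -- S_M → ∞
    set S : ℕ → ℝ≥0∞ := fun M => ∑ i ∈ Finset.range M, μ (A (i + N)) with hSdef
    have htail : ∑' i, μ (A (i + N)) = ∞ := by
      by_contra htail
      have : ∑ i ∈ Finset.range N, μ (A i) + ∑' i, μ (A (i + N)) = ∑' i, μ (A i) :=
        ENNReal.summable.sum_add_tsum_nat_add'
      rw [h2] at this
      exact (ENNReal.add_ne_top.2 ⟨(ENNReal.sum_lt_top.2 fun i _ =>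
        (measure_lt_top μ _)).ne, htail⟩) this
    have hStend : Tendsto S atTop (𝓝 ∞) := by
      have := ENNReal.tendsto_nat_tsum (fun i => μ (A (i + N)))
      rwa [htail] at this
    have hSfin : ∀ M, S M ≠ ∞ := fun M =>
      (ENNReal.sum_lt_top.2 fun i _ => measure_lt_top μ _).ne
    -- key inequality rearranged for S M ≠ 0
    have hineq : ∀ M, S M ≠ 0 → 1 ≤ t * (S M)⁻¹ + K * t := by
      intro M hS0
      have hkey := pz_key μ A hA K h1 N M
      have hinv : S M * (S M)⁻¹ = 1 := ENNReal.mul_inv_cancel hS0 (hSfin M)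
      calc (1 : ℝ≥0∞) = (S M * S M) * ((S M)⁻¹ * (S M)⁻¹) := by
            rw [show S M * S M * ((S M)⁻¹ * (S M)⁻¹)
              = (S M * (S M)⁻¹) * (S M * (S M)⁻¹) by ring, hinv, one_mul]
        _ ≤ ((S M + K * S M * S M) * t) * ((S M)⁻¹ * (S M)⁻¹) := by
            gcongr
        _ = (S M * (S M)⁻¹) * (t * (S M)⁻¹) +
            (S M * (S M)⁻¹) * (S M * (S M)⁻¹) * (K * t) := by ring
        _ = t * (S M)⁻¹ + K * t := by rw [hinv]; ring
    -- take limits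
    have hinvtend : Tendsto (fun M => t * (S M)⁻¹ + K * t) atTop (𝓝 (K * t)) := by
      have h1' : Tendsto (fun M => (S M)⁻¹) atTop (𝓝 0) := by
        have := ENNReal.tendsto_inv_iff.2 hStend
        simpa using this
      have h2' : Tendsto (fun M => t * (S M)⁻¹) atTop (𝓝 0) := by
        have := ENNReal.Tendsto.const_mul h1' (Or.inr httop)
        simpa using this
      have := h2'.add (tendsto_const_nhds : Tendsto (fun _ : ℕ => K * t) atTop (𝓝 (K * t)))
      simpa using this
    have hone : (1 : ℝ≥0∞) ≤ K * t := by
      refine ge_of_tendsto hinvtend ?_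
      have h0 := ENNReal.tendsto_nhds_top_iff_nat.1 hStend 0
      filter_upwards [h0] with M hM
      exact hineq M (by simpa using hM.ne')
    rw [ENNReal.div_le_iff_le_mul (Or.inl hK.ne') (Or.inl hKtop)]
    rwa [mul_comm] at hone
  rw [hlimsup]
  have hcont : μ (⋂ N, V N) = ⨅ N, μ (V N) :=
    Directed.measure_iInter (fun N => (hVmeas N).nullMeasurableSet)
      (hVanti.directed_ge) ⟨0, measure_ne_top μ _⟩
  rw [hcont]
  exact le_iInf hbound
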